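/- Let q be an odd prime power, χ a nontrivial multiplicative character on F_q, and P(x) ∈ F_q[x] of degree n with Σ_{x∈F_q} χ(xP(x)) = 0. If the character χ^{n+1} is nontrivial, then the matrix M₀ = [χ(P*(a,b))]_{a,b∈F_q}, where P*(x,y) is the homogenization of P of degree n, is singular. -/

import Mathlib

theorem stmt_11 (F : Type*) [Field F] [Fintype F] [DecidableEq F]
    (hodd : Odd (Fintype.card F)) (χ : MulChar F ℂ) (hχ : χ ≠ 1)
    (P : Polynomial F) (hP : P ≠ 0)
    (hsum : ∑ x : F, χ (x * P.eval x) = 0)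
    (hχn : χ ^ (P.natDegree + 1) ≠ 1) :
    Matrix.det (Matrix.of fun a b : F =>
        χ (∑ s ∈ Finset.range (P.natDegree + 1),
            P.coeff s * a ^ (P.natDegree - s) * b ^ s)) = 0 := by
  set n := P.natDegree with hn
  rw [← Matrix.exists_mulVec_eq_zero_iff]
  refine ⟨fun b => χ b, ?_, ?_⟩
  · intro h
    have h1 := congrFun h 1
    simp at h1
  · funext a
    simp only [Matrix.mulVec, Matrix.of_apply, dotProduct, Pi.zero_apply]
    by_cases ha : a = 0
    · subst ha
      have hterm : ∀ b : F, (∑ s ∈ Finset.range (n + 1),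
          P.coeff s * (0:F) ^ (n - s) * b ^ s) = P.leadingCoeff * b ^ n := by
        intro b
        rw [Finset.sum_eq_single n]
        · rw [Nat.sub_self, pow_zero, mul_one, Polynomial.leadingCoeff, ← hn]
        · intro s hs hne
          have hlt : s < n := lt_of_le_of_ne (Nat.lt_succ_iff.mp (Finset.mem_range.mp hs)) hne
          have h0 : n - s ≠ 0 := Nat.sub_ne_zero_of_lt hlt
          simp [zero_pow h0]
        · simp
      simp only [hterm]
      have : ∀ b : F, χ (P.leadingCoeff * b ^ n) * χ b
          = χ P.leadingCoeff * (χ ^ (n + 1)) b := by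
        intro b
        rw [map_mul, map_pow, MulChar.pow_apply' χ (Nat.succ_ne_zero n), pow_succ]
        ring
      simp only [this, ← Finset.mul_sum]
      rw [MulChar.sum_eq_zero_of_ne_one hχn, mul_zero]
    · have key : ∀ b : F, (∑ s ∈ Finset.range (n + 1),
          P.coeff s * a ^ (n - s) * b ^ s) = a ^ n * P.eval (a⁻¹ * b) := by
        intro b
        rw [Polynomial.eval_eq_sum_range, Finset.mul_sum]
        refine Finset.sum_congr rfl fun s hs => ?_
        have hsle : s ≤ n := Nat.lt_succ_iff.mp (Finset.mem_range.mp hs)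
        rw [mul_pow, pow_sub₀ a ha hsle]
        field_simp
        rw [one_div, inv_pow, mul_right_comm (P.coeff s), mul_inv_cancel_right₀ (pow_ne_zero s ha)]
      simp only [key]
      rw [← Fintype.sum_equiv (Equiv.mulLeft₀ a ha)
        (fun t => χ (a ^ n * P.eval (a⁻¹ * (a * t))) * χ (a * t))
        (fun b => χ (a ^ n * P.eval (a⁻¹ * b)) * χ b) (fun t => rfl)]
      have hsimp : ∀ t : F, χ (a ^ n * P.eval (a⁻¹ * (a * t))) * χ (a * t)
          = χ a ^ (n + 1) * χ (t * P.eval t) := by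
        intro t
        rw [inv_mul_cancel_left₀ ha]
        simp [map_mul, map_pow, pow_succ]
        ring
      simp only [hsimp, ← Finset.mul_sum, hsum, mul_zero]
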